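/- If the arbitrage index of a cycle of length n+1 satisfies I > 1/(r₁^{n+1}·r₂^{n+1}), then the reversed cycle A → Bⁿ → ⋯ → B¹ → A admits no profitable cyclic transaction: for every input δ > 0, the utility U_rev(δ) of the reversed cyclic transaction is strictly negative. -/

import Mathlib

/-- Constant-product AMM swap: output of swapping input `δ` through a pool with
input-side reserve `a`, output-side reserve `b` and fee parameters `r1, r2`. -/
noncomputable def swap (r1 r2 a b δ : ℝ) : ℝ := r1 * r2 * b * δ / (a + r1 * δ)

/-- Output of feeding an input through a sequence of pools; each pool is a pair
`(input-side reserve, output-side reserve)` along the direction of trade. -/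
noncomputable def cyclicOut (r1 r2 : ℝ) : List (ℝ × ℝ) → ℝ → ℝ
  | [], δ => δ
  | p :: ps, δ => cyclicOut r1 r2 ps (swap r1 r2 p.1 p.2 δ)

/-- Arbitrage index of a cycle of pools: product of output-side reserves divided
by product of input-side reserves. -/
noncomputable def arbIndex (ps : List (ℝ × ℝ)) : ℝ :=
  (ps.map Prod.snd).prod / (ps.map Prod.fst).prod

/-- The reversed cycle: the same pools in opposite order with the roles of the
two reserves of each pool interchanged. -/
def revPools (ps : List (ℝ × ℝ)) : List (ℝ × ℝ) := (ps.map Prod.swap).reverse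

/-- The updated pools after executing a cyclic transaction with input `δ`:
each pool's input-side reserve increases by the amount swapped in and its
output-side reserve decreases by the amount swapped out. -/
noncomputable def execPools (r1 r2 : ℝ) : List (ℝ × ℝ) → ℝ → List (ℝ × ℝ)
  | [], _ => []
  | p :: ps, δ =>
      (p.1 + δ, p.2 - swap r1 r2 p.1 p.2 δ) :: execPools r1 r2 ps (swap r1 r2 p.1 p.2 δ)


lemma swap_pos' {r1 r2 a b δ : ℝ} (hr1 : 0 < r1) (hr2 : 0 < r2) (ha : 0 < a)
    (hb : 0 < b) (hδ : 0 < δ) : 0 < swap r1 r2 a b δ := by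
  unfold swap; positivity

lemma swap_lt' {r1 r2 a b δ : ℝ} (hr1 : 0 < r1) (hr2 : 0 < r2) (ha : 0 < a)
    (hb : 0 < b) (hδ : 0 < δ) : swap r1 r2 a b δ < r1 * r2 * (b / a) * δ := by
  unfold swap
  set c := b / a with hcdef
  have hca : c * a = b := by rw [hcdef]; exact div_mul_cancel₀ b (ne_of_gt ha)
  have hc : 0 < c := div_pos hb ha
  have h2 : r1 * r2 * c * δ * (a + r1 * δ) = r1 * r2 * b * δ + r1 * r2 * c * δ * (r1 * δ) := by
    rw [← hca]; ring
  rw [div_lt_iff₀ (by positivity), h2]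
  have : 0 < r1 * r2 * c * δ * (r1 * δ) := by positivity
  linarith

lemma cyclicOut_bound' (r1 r2 : ℝ) (hr1 : 0 < r1) (hr2 : 0 < r2) :
    ∀ ps : List (ℝ × ℝ), (∀ p ∈ ps, 0 < p.1 ∧ 0 < p.2) → ∀ δ : ℝ, 0 < δ →
    0 < cyclicOut r1 r2 ps δ ∧
    cyclicOut r1 r2 ps δ ≤
      (r1 * r2) ^ ps.length * ((ps.map Prod.snd).prod / (ps.map Prod.fst).prod) * δ := by
  intro ps
  induction ps with
  | nil => intro _ δ hδ; simpa [cyclicOut] using hδ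
  | cons p ps ih =>
    intro hpos δ hδ
    obtain ⟨ha, hb⟩ := hpos p List.mem_cons_self
    have hps : ∀ q ∈ ps, 0 < q.1 ∧ 0 < q.2 := fun q hq => hpos q (List.mem_cons_of_mem _ hq)
    have hδ' : 0 < swap r1 r2 p.1 p.2 δ := swap_pos' hr1 hr2 ha hb hδ
    obtain ⟨h1, h2⟩ := ih hps _ hδ'
    refine ⟨by simpa [cyclicOut] using h1, ?_⟩
    have hF : 0 < (ps.map Prod.fst).prod :=
      List.prod_pos (by intro x hx; obtain ⟨q, hq, rfl⟩ := List.mem_map.1 hx; exact (hps q hq).1)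
    have hS : 0 < (ps.map Prod.snd).prod :=
      List.prod_pos (by intro x hx; obtain ⟨q, hq, rfl⟩ := List.mem_map.1 hx; exact (hps q hq).2)
    have hC : 0 < (r1 * r2) ^ ps.length * ((ps.map Prod.snd).prod / (ps.map Prod.fst).prod) := by
      positivity
    have hsw : swap r1 r2 p.1 p.2 δ ≤ r1 * r2 * (p.2 / p.1) * δ :=
      le_of_lt (swap_lt' hr1 hr2 ha hb hδ)
    have : cyclicOut r1 r2 (p :: ps) δ ≤
        (r1 * r2) ^ ps.length * ((ps.map Prod.snd).prod / (ps.map Prod.fst).prod) *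
          (r1 * r2 * (p.2 / p.1) * δ) := by
      calc cyclicOut r1 r2 (p :: ps) δ = cyclicOut r1 r2 ps (swap r1 r2 p.1 p.2 δ) := rfl
        _ ≤ _ := h2
        _ ≤ _ := by exact mul_le_mul_of_nonneg_left hsw (le_of_lt hC)
    refine this.trans (le_of_eq ?_)
    simp only [List.map_cons, List.prod_cons, List.length_cons, pow_succ]
    field_simp

lemma cyclicOut_strict' (r1 r2 : ℝ) (hr1 : 0 < r1) (hr2 : 0 < r2)
    (p : ℝ × ℝ) (ps : List (ℝ × ℝ))
    (hpos : ∀ q ∈ p :: ps, 0 < q.1 ∧ 0 < q.2) (δ : ℝ) (hδ : 0 < δ) :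
    cyclicOut r1 r2 (p :: ps) δ <
      (r1 * r2) ^ (p :: ps).length *
        (((p :: ps).map Prod.snd).prod / ((p :: ps).map Prod.fst).prod) * δ := by
  obtain ⟨ha, hb⟩ := hpos p List.mem_cons_self
  have hps : ∀ q ∈ ps, 0 < q.1 ∧ 0 < q.2 := fun q hq => hpos q (List.mem_cons_of_mem _ hq)
  have hδ' : 0 < swap r1 r2 p.1 p.2 δ := swap_pos' hr1 hr2 ha hb hδ
  obtain ⟨h1, h2⟩ := cyclicOut_bound' r1 r2 hr1 hr2 ps hps _ hδ'
  have hF : 0 < (ps.map Prod.fst).prod :=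
    List.prod_pos (by intro x hx; obtain ⟨q, hq, rfl⟩ := List.mem_map.1 hx; exact (hps q hq).1)
  have hS : 0 < (ps.map Prod.snd).prod :=
    List.prod_pos (by intro x hx; obtain ⟨q, hq, rfl⟩ := List.mem_map.1 hx; exact (hps q hq).2)
  have hC : 0 < (r1 * r2) ^ ps.length * ((ps.map Prod.snd).prod / (ps.map Prod.fst).prod) := by
    positivity
  have hsw : swap r1 r2 p.1 p.2 δ < r1 * r2 * (p.2 / p.1) * δ := swap_lt' hr1 hr2 ha hb hδ
  have hlt : cyclicOut r1 r2 (p :: ps) δ <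
      (r1 * r2) ^ ps.length * ((ps.map Prod.snd).prod / (ps.map Prod.fst).prod) *
        (r1 * r2 * (p.2 / p.1) * δ) := by
    calc cyclicOut r1 r2 (p :: ps) δ = cyclicOut r1 r2 ps (swap r1 r2 p.1 p.2 δ) := rfl
      _ ≤ _ := h2
      _ < _ := by exact (mul_lt_mul_iff_right₀ hC).2 hsw
  refine hlt.trans_le (le_of_eq ?_)
  simp only [List.map_cons, List.prod_cons, List.length_cons, pow_succ]
  field_simp

/-- if the arbitrage index of a cycle of length n+1 exceeds
1/(r1^(n+1) * r2^(n+1)), then the reversed cycle admits no profitable cyclic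
transaction: every positive input has strictly negative utility. -/
theorem reversed_cycle_not_profitable
    (n : ℕ) (ps : List (ℝ × ℝ)) (hlen : ps.length = n + 1)
    (hpos : ∀ p ∈ ps, 0 < p.1 ∧ 0 < p.2)
    (r1 r2 : ℝ) (hr1 : 0 < r1) (hr1' : r1 ≤ 1) (hr2 : 0 < r2) (hr2' : r2 ≤ 1)
    (hI : arbIndex ps > 1 / (r1 ^ (n + 1) * r2 ^ (n + 1))) :
    ∀ δ : ℝ, 0 < δ → cyclicOut r1 r2 (revPools ps) δ - δ < 0 := by
  intro δ hδ
  have hF : 0 < (ps.map Prod.fst).prod :=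
    List.prod_pos (by intro x hx; obtain ⟨q, hq, rfl⟩ := List.mem_map.1 hx; exact (hpos q hq).1)
  have hS : 0 < (ps.map Prod.snd).prod :=
    List.prod_pos (by intro x hx; obtain ⟨q, hq, rfl⟩ := List.mem_map.1 hx; exact (hpos q hq).2)
  have hqpos : ∀ q ∈ revPools ps, 0 < q.1 ∧ 0 < q.2 := by
    intro q hq
    rw [revPools, List.mem_reverse, List.mem_map] at hq
    obtain ⟨p, hp, rfl⟩ := hq
    exact ⟨(hpos p hp).2, (hpos p hp).1⟩
  have hlenrev : (revPools ps).length = n + 1 := by simp [revPools, hlen]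
  have hsnd : ((revPools ps).map Prod.snd).prod = (ps.map Prod.fst).prod := by
    simp [revPools, List.map_reverse, List.map_map, Function.comp_def, List.prod_reverse]
  have hfst : ((revPools ps).map Prod.fst).prod = (ps.map Prod.snd).prod := by
    simp [revPools, List.map_reverse, List.map_map, Function.comp_def, List.prod_reverse]
  obtain ⟨q, qs, hqqs⟩ : ∃ q qs, revPools ps = q :: qs := by
    cases h : revPools ps with
    | nil => rw [h] at hlenrev; simp at hlenrev
    | cons q qs => exact ⟨q, qs, rfl⟩
  have hstrict := cyclicOut_strict' r1 r2 hr1 hr2 q qs (hqqs ▸ hqpos) δ hδ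
  rw [← hqqs, hlenrev, hsnd, hfst] at hstrict
  -- bound the constant
  set c : ℝ := (r1 * r2) ^ (n + 1) with hc
  have hcpos : 0 < c := by positivity
  have hc1 : c ≤ 1 := by
    rw [hc]
    calc (r1 * r2) ^ (n + 1) ≤ 1 ^ (n + 1) := by
          apply pow_le_pow_left₀ (by positivity)
          nlinarith
      _ = 1 := one_pow _
  have hIc : (ps.map Prod.snd).prod / (ps.map Prod.fst).prod > 1 / c := by
    have : r1 ^ (n + 1) * r2 ^ (n + 1) = c := by rw [hc, mul_pow]
    rw [← this]
    exact hI
  have h1c : (1 : ℝ) ≤ 1 / c := by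
    rw [le_div_iff₀ hcpos]; linarith
  have hcS : c < (ps.map Prod.snd).prod / (ps.map Prod.fst).prod :=
    lt_of_le_of_lt (hc1.trans h1c) hIc
  have hK : c * ((ps.map Prod.fst).prod / (ps.map Prod.snd).prod) ≤ 1 := by
    rw [lt_div_iff₀ hF] at hcS
    rw [← mul_div_assoc, div_le_one hS]
    linarith
  have hfinal : c * ((ps.map Prod.fst).prod / (ps.map Prod.snd).prod) * δ ≤ δ := by
    nlinarith [mul_pos hcpos (div_pos hF hS)]
  linarith
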